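/- The vector field b satisfies the growth condition of Ambrosio's uniqueness theorem: there exist functions f ∈ L¹(ℝ³;ℝ³) and g ∈ L^∞(ℝ³;ℝ³) such that b(x)/(1+|x|) = f(x) + g(x) for almost every x ∈ ℝ³. -/
import Mathlib


open MeasureTheory Real Set Filter Topology
open scoped ENNReal

noncomputable section

/-- The upper paraboloid `P⁺ = {(x,y,z) : x² + y² ≤ z}`. -/
def Pplus : Set (ℝ × ℝ × ℝ) := {p | p.1 ^ 2 + p.2.1 ^ 2 ≤ p.2.2}

/-- The lower paraboloid `P⁻ = {(x,y,z) : x² + y² ≤ -z}`. -/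
def Pminus : Set (ℝ × ℝ × ℝ) := {p | p.1 ^ 2 + p.2.1 ^ 2 ≤ -p.2.2}

/-- `P = P⁺ ∪ P⁻`. -/
def PP : Set (ℝ × ℝ × ℝ) := Pplus ∪ Pminus

open scoped Classical in
/-- The vector field `b(x,y,z) = (-sgn z · x/z², -sgn z · y/z², -2/|z|)` on `P \ {z = 0}`,
and `0` elsewhere. -/
def bb : ℝ × ℝ × ℝ → ℝ × ℝ × ℝ := fun p =>
  if p ∈ PP ∧ p.2.2 ≠ 0 then
    (-(Real.sign p.2.2) * p.1 / p.2.2 ^ 2,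
     -(Real.sign p.2.2) * p.2.1 / p.2.2 ^ 2,
     -2 / |p.2.2|)
  else (0, 0, 0)

namespace BBaux

lemma abs_sign_eq_one {z : ℝ} (hz : z ≠ 0) : |Real.sign z| = 1 := by
  rcases hz.lt_or_gt with h | h
  · rw [Real.sign_of_neg h]; norm_num
  · rw [Real.sign_of_pos h]; norm_num

lemma measurable_sign : Measurable Real.sign := by
  have : Real.sign = fun r : ℝ => if r < 0 then (-1 : ℝ) else if 0 < r then 1 else 0 := by
    funext r; rfl
  rw [this]
  exact Measurable.ite (measurableSet_lt measurable_id measurable_const) measurable_const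
    (Measurable.ite (measurableSet_lt measurable_const measurable_id) measurable_const
      measurable_const)

lemma measurableSet_PP : MeasurableSet PP := by
  apply MeasurableSet.union
  · exact measurableSet_le (by fun_prop) (by fun_prop)
  · exact measurableSet_le (by fun_prop) (by fun_prop)

lemma measurable_bb : Measurable bb := by
  classical
  have hset : MeasurableSet {p : ℝ × ℝ × ℝ | p ∈ PP ∧ p.2.2 ≠ 0} := by
    have : {p : ℝ × ℝ × ℝ | p ∈ PP ∧ p.2.2 ≠ 0}
        = PP ∩ ((fun p : ℝ × ℝ × ℝ => p.2.2) ⁻¹' ({0}ᶜ)) := by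
      ext p; simp [and_comm]
    rw [this]
    exact measurableSet_PP.inter ((measurable_snd.snd) (measurableSet_singleton (0:ℝ)).compl)
  unfold bb
  apply Measurable.ite hset _ measurable_const
  apply Measurable.prod
  · exact (((measurable_sign.comp measurable_snd.snd).neg.mul measurable_fst).div
      ((measurable_snd.snd).pow_const 2))
  apply Measurable.prod
  · exact (((measurable_sign.comp measurable_snd.snd).neg.mul measurable_snd.fst).div
      ((measurable_snd.snd).pow_const 2))
  · exact measurable_const.div (measurable_snd.snd.abs)

/-- The function `b` scaled by `(1+‖x‖)⁻¹`. -/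
def hfun : ℝ × ℝ × ℝ → ℝ × ℝ × ℝ := fun p => (1 + ‖p‖)⁻¹ • bb p

lemma measurable_hfun : Measurable hfun :=
  ((measurable_const.add measurable_norm).inv).smul measurable_bb

lemma norm_hfun_le (p : ℝ × ℝ × ℝ) : ‖hfun p‖ ≤ ‖bb p‖ := by
  rw [hfun, norm_smul]
  have h1 : (1:ℝ) ≤ 1 + ‖p‖ := le_add_of_nonneg_right (norm_nonneg p)
  have h2 : ‖(1 + ‖p‖)⁻¹‖ ≤ 1 := by
    rw [Real.norm_eq_abs, abs_of_nonneg (by positivity)]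
    exact inv_le_one_of_one_le₀ h1
  calc ‖(1 + ‖p‖)⁻¹‖ * ‖bb p‖ ≤ 1 * ‖bb p‖ :=
        mul_le_mul_of_nonneg_right h2 (norm_nonneg _)
    _ = ‖bb p‖ := one_mul _

/-- The set where `b` is singular. -/
def AA : Set (ℝ × ℝ × ℝ) := {p | p ∈ PP ∧ p.2.2 ≠ 0 ∧ |p.2.2| ≤ 1}

lemma measurableSet_AA : MeasurableSet AA := by
  have : AA = PP ∩ (((fun p : ℝ × ℝ × ℝ => p.2.2) ⁻¹' ({0}ᶜ))
      ∩ {p : ℝ × ℝ × ℝ | |p.2.2| ≤ 1}) := by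
    ext p; simp [AA]; tauto
  rw [this]
  exact measurableSet_PP.inter
    (((measurable_snd.snd) (measurableSet_singleton (0:ℝ)).compl).inter
      (measurableSet_le (measurable_snd.snd.abs) measurable_const))

lemma norm_triple (a b c : ℝ) : ‖((a, b, c) : ℝ × ℝ × ℝ)‖ = max |a| (max |b| |c|) := by
  rw [Prod.norm_def, Prod.norm_def]
  simp [Real.norm_eq_abs]

lemma sq_add_sq_le {p : ℝ × ℝ × ℝ} (hp : p ∈ PP) : p.1 ^ 2 + p.2.1 ^ 2 ≤ |p.2.2| := by
  rcases hp with h | h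
  · exact le_trans h (le_abs_self _)
  · exact le_trans h (neg_le_abs _)

lemma norm_bb_eq {p : ℝ × ℝ × ℝ} (hp : p ∈ PP) (hz : p.2.2 ≠ 0) :
    ‖bb p‖ = max (|p.1| / p.2.2 ^ 2) (max (|p.2.1| / p.2.2 ^ 2) (2 / |p.2.2|)) := by
  classical
  rw [bb, if_pos ⟨hp, hz⟩, norm_triple]
  have e : ∀ a : ℝ, |(-(Real.sign p.2.2) * a / p.2.2 ^ 2)| = |a| / p.2.2 ^ 2 := by
    intro a
    rw [abs_div, abs_mul, abs_neg, abs_sign_eq_one hz, one_mul, abs_pow, sq_abs]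
  rw [e, e]
  congr 2
  rw [abs_div, abs_abs]
  norm_num

lemma bb_singular {p : ℝ × ℝ × ℝ} (hp : p ∈ PP) (hz : p.2.2 ≠ 0) (hz1 : |p.2.2| ≤ 1) :
    ‖bb p‖ ≤ 2 * |p.2.2| ^ (-(3:ℝ)/2) := by
  have ht : (0:ℝ) < |p.2.2| := abs_pos.mpr hz
  have hxy := sq_add_sq_le hp
  have hx2 : p.1 ^ 2 ≤ |p.2.2| := by nlinarith [sq_nonneg p.2.1]
  have hy2 : p.2.1 ^ 2 ≤ |p.2.2| := by nlinarith [sq_nonneg p.1]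
  rw [norm_bb_eq hp hz]
  have key : ∀ a : ℝ, a ^ 2 ≤ |p.2.2| → |a| / p.2.2 ^ 2 ≤ 2 * |p.2.2| ^ (-(3:ℝ)/2) := by
    intro a ha
    have hz2 : (0:ℝ) < p.2.2 ^ 2 := by positivity
    rw [div_le_iff₀ hz2]
    have h1 : |a| ≤ |p.2.2| ^ ((1:ℝ)/2) := by
      rw [← Real.sqrt_eq_rpow]
      exact (Real.le_sqrt (abs_nonneg a) ht.le).mpr (by rwa [sq_abs])
    have h2 : p.2.2 ^ 2 = |p.2.2| ^ (2:ℝ) := by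
      rw [← sq_abs, ← Real.rpow_natCast |p.2.2| 2]
      norm_num
    have h3 : |p.2.2| ^ ((1:ℝ)/2) = |p.2.2| ^ (-(3:ℝ)/2) * |p.2.2| ^ (2:ℝ) := by
      rw [← Real.rpow_add ht]; norm_num
    have h4 : (0:ℝ) ≤ |p.2.2| ^ (-(3:ℝ)/2) * |p.2.2| ^ (2:ℝ) := by positivity
    calc |a| ≤ |p.2.2| ^ (-(3:ℝ)/2) * |p.2.2| ^ (2:ℝ) := h3 ▸ h1
      _ ≤ 2 * (|p.2.2| ^ (-(3:ℝ)/2) * |p.2.2| ^ (2:ℝ)) := by linarith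
      _ = 2 * |p.2.2| ^ (-(3:ℝ)/2) * p.2.2 ^ 2 := by rw [h2]; ring
  refine max_le (key _ hx2) (max_le (key _ hy2) ?_)
  have h5 : |p.2.2| ^ (-(1:ℝ)) ≤ |p.2.2| ^ (-(3:ℝ)/2) :=
    Real.rpow_le_rpow_of_exponent_ge ht hz1 (by norm_num)
  calc 2 / |p.2.2| = 2 * |p.2.2| ^ (-(1:ℝ)) := by
        rw [Real.rpow_neg_one]; ring
    _ ≤ 2 * |p.2.2| ^ (-(3:ℝ)/2) := by linarith

lemma rpow_decouple {x y z : ℝ} (hx : x ≠ 0) (hy : y ≠ 0) (hz : z ≠ 0)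
    (hx2 : x ^ 2 ≤ |z|) (hy2 : y ^ 2 ≤ |z|) :
    |z| ^ (-(3:ℝ)/2) ≤ |x| ^ (-(3:ℝ)/4) * (|y| ^ (-(3:ℝ)/4) * |z| ^ (-(3:ℝ)/4)) := by
  have ht : (0:ℝ) < |z| := abs_pos.mpr hz
  have e : ∀ a : ℝ, (a ^ 2 : ℝ) ^ (-(3:ℝ)/8) = |a| ^ (-(3:ℝ)/4) := by
    intro a
    rw [← sq_abs, ← Real.rpow_natCast |a| 2, ← Real.rpow_mul (abs_nonneg a)]
    norm_num
  have h1 : |z| ^ (-(3:ℝ)/8) ≤ |x| ^ (-(3:ℝ)/4) := by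
    rw [← e]
    exact Real.rpow_le_rpow_of_nonpos (by positivity) hx2 (by norm_num)
  have h2 : |z| ^ (-(3:ℝ)/8) ≤ |y| ^ (-(3:ℝ)/4) := by
    rw [← e]
    exact Real.rpow_le_rpow_of_nonpos (by positivity) hy2 (by norm_num)
  calc |z| ^ (-(3:ℝ)/2)
      = |z| ^ (-(3:ℝ)/8) * (|z| ^ (-(3:ℝ)/8) * |z| ^ (-(3:ℝ)/4)) := by
        rw [← Real.rpow_add ht, ← Real.rpow_add ht]; norm_num
    _ ≤ |x| ^ (-(3:ℝ)/4) * (|y| ^ (-(3:ℝ)/4) * |z| ^ (-(3:ℝ)/4)) := by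
        gcongr <;> positivity

/-- One-dimensional integrable profile. -/
def psi : ℝ → ℝ := Set.indicator (Icc (-1:ℝ) 1) (fun t => |t| ^ (-(3:ℝ)/4))

lemma psi_nonneg (t : ℝ) : 0 ≤ psi t :=
  Set.indicator_nonneg (fun s _ => Real.rpow_nonneg (abs_nonneg s) _) t

lemma psi_eq {t : ℝ} (ht : |t| ≤ 1) : psi t = |t| ^ (-(3:ℝ)/4) := by
  have : t ∈ Icc (-1:ℝ) 1 := by
    rcases abs_le.mp ht with ⟨h1, h2⟩; exact ⟨h1, h2⟩
  exact Set.indicator_of_mem this _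

lemma integrable_psi : Integrable psi := by
  rw [psi, integrable_indicator_iff measurableSet_Icc]
  have h1 : IntervalIntegrable (fun t : ℝ => |t| ^ (-(3:ℝ)/4)) volume 0 1 := by
    have h := intervalIntegral.intervalIntegrable_rpow' (a := 0) (b := 1)
      (r := -(3:ℝ)/4) (by norm_num)
    rw [intervalIntegrable_iff] at h ⊢
    refine h.congr_fun ?_ measurableSet_uIoc
    intro t htmem
    rw [Set.uIoc_of_le (by norm_num : (0:ℝ) ≤ 1)] at htmem
    simp only [abs_of_pos htmem.1]
  have h2 : IntervalIntegrable (fun t : ℝ => |t| ^ (-(3:ℝ)/4)) volume (-1) 0 := by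
    have := (IntervalIntegrable.iff_comp_neg
      (f := fun t : ℝ => |t| ^ (-(3:ℝ)/4)) (a := 0) (b := 1)).mp h1
    simpa [abs_neg] using this.symm
  have h3 := h2.trans h1
  rw [intervalIntegrable_iff_integrableOn_Ioc_of_le (by norm_num : (-1:ℝ) ≤ 1)] at h3
  exact (integrableOn_Icc_iff_integrableOn_Ioc).mpr h3

lemma integrable_D :
    Integrable (fun p : ℝ × ℝ × ℝ => 2 * (psi p.1 * (psi p.2.1 * psi p.2.2))) volume := by
  have h2 : Integrable (fun q : ℝ × ℝ => psi q.1 * psi q.2)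
      ((volume : Measure ℝ).prod volume) := integrable_psi.mul_prod integrable_psi
  rw [← Measure.volume_eq_prod] at h2
  have h3 : Integrable (fun p : ℝ × (ℝ × ℝ) => psi p.1 * (psi p.2.1 * psi p.2.2))
      ((volume : Measure ℝ).prod volume) := integrable_psi.mul_prod h2
  rw [← Measure.volume_eq_prod] at h3
  exact h3.const_mul 2

lemma fst_ne_zero_ae : ∀ᵐ p : ℝ × ℝ × ℝ ∂volume, p.1 ≠ 0 := by
  rw [ae_iff]
  have : {p : ℝ × ℝ × ℝ | ¬ p.1 ≠ 0} = ({0} : Set ℝ) ×ˢ (univ : Set (ℝ × ℝ)) := by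
    ext ⟨a, b, c⟩; simp [eq_comm]
  rw [this, Measure.volume_eq_prod, Measure.prod_prod]
  simp

lemma snd_fst_ne_zero_ae : ∀ᵐ p : ℝ × ℝ × ℝ ∂volume, p.2.1 ≠ 0 := by
  rw [ae_iff]
  have : {p : ℝ × ℝ × ℝ | ¬ p.2.1 ≠ 0}
      = (univ : Set ℝ) ×ˢ ((({0} : Set ℝ)) ×ˢ (univ : Set ℝ)) := by
    ext ⟨a, b, c⟩; simp [eq_comm]
  rw [this, Measure.volume_eq_prod, Measure.prod_prod, Measure.volume_eq_prod, Measure.prod_prod]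
  simp

lemma norm_bb_le_two {p : ℝ × ℝ × ℝ} (hp : p ∉ AA) : ‖bb p‖ ≤ 2 := by
  classical
  by_cases hc : p ∈ PP ∧ p.2.2 ≠ 0
  · have hz1 : 1 < |p.2.2| := by
      by_contra hle
      push_neg at hle
      exact hp ⟨hc.1, hc.2, hle⟩
    have hxy := sq_add_sq_le hc.1
    have ht : (0:ℝ) < |p.2.2| := by linarith
    rw [norm_bb_eq hc.1 hc.2]
    have key : ∀ a : ℝ, a ^ 2 ≤ |p.2.2| → |a| / p.2.2 ^ 2 ≤ 2 := by
      intro a ha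
      rw [div_le_iff₀ (pow_two_pos_of_ne_zero hc.2)]
      nlinarith [sq_abs p.2.2, sq_abs a, abs_nonneg a, abs_nonneg p.2.2,
        sq_nonneg (|a| - |p.2.2|)]
    refine max_le (key _ (by nlinarith [sq_nonneg p.2.1]))
      (max_le (key _ (by nlinarith [sq_nonneg p.1])) ?_)
    rw [div_le_iff₀ ht]
    linarith
  · rw [bb, if_neg hc, norm_triple]
    simp

end BBaux

open BBaux in
/-- Growth condition: `b(x)/(1+|x|)` splits as `f + g` with `f ∈ L¹(ℝ³;ℝ³)` and
`g ∈ L^∞(ℝ³;ℝ³)`. -/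
theorem bb_growth_condition :
    ∃ f g : ℝ × ℝ × ℝ → ℝ × ℝ × ℝ,
      MeasureTheory.Integrable f volume ∧
      (∃ C : ℝ, ∀ᵐ x : ℝ × ℝ × ℝ ∂volume, ‖g x‖ ≤ C) ∧
      ∀ᵐ x : ℝ × ℝ × ℝ ∂volume, (1 + ‖x‖)⁻¹ • bb x = f x + g x := by
  classical
  refine ⟨AA.indicator hfun, AAᶜ.indicator hfun, ?_, ⟨2, ?_⟩, ?_⟩
  · -- integrability of the singular part
    apply Integrable.mono' integrable_D
      ((measurable_hfun.indicator measurableSet_AA).aestronglyMeasurable)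
    filter_upwards [fst_ne_zero_ae, snd_fst_ne_zero_ae] with p hx0 hy0
    by_cases hp : p ∈ AA
    · rw [Set.indicator_of_mem hp]
      obtain ⟨hPP, hz, hz1⟩ := hp
      have hxy := sq_add_sq_le hPP
      have hx2 : p.1 ^ 2 ≤ |p.2.2| := by nlinarith [sq_nonneg p.2.1]
      have hy2 : p.2.1 ^ 2 ≤ |p.2.2| := by nlinarith [sq_nonneg p.1]
      have hx1 : |p.1| ≤ 1 := by nlinarith [abs_nonneg p.1, sq_abs p.1]
      have hy1 : |p.2.1| ≤ 1 := by nlinarith [abs_nonneg p.2.1, sq_abs p.2.1]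
      calc ‖hfun p‖ ≤ ‖bb p‖ := norm_hfun_le p
        _ ≤ 2 * |p.2.2| ^ (-(3:ℝ)/2) := bb_singular hPP hz hz1
        _ ≤ 2 * (|p.1| ^ (-(3:ℝ)/4) * (|p.2.1| ^ (-(3:ℝ)/4) * |p.2.2| ^ (-(3:ℝ)/4))) := by
            have := rpow_decouple hx0 hy0 hz hx2 hy2
            linarith
        _ = 2 * (psi p.1 * (psi p.2.1 * psi p.2.2)) := by
            rw [psi_eq hx1, psi_eq hy1, psi_eq hz1]
    · rw [Set.indicator_of_notMem hp, norm_zero]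
      have := psi_nonneg p.1
      have := psi_nonneg p.2.1
      have := psi_nonneg p.2.2
      positivity
  · -- essential boundedness of the regular part
    apply Filter.Eventually.of_forall
    intro p
    by_cases hp : p ∈ AA
    · rw [Set.indicator_of_notMem (by simp [hp])]
      simp
    · rw [Set.indicator_of_mem (Set.mem_compl hp)]
      exact (norm_hfun_le p).trans (norm_bb_le_two hp)
  · -- the decomposition
    apply Filter.Eventually.of_forall
    intro p
    by_cases hp : p ∈ AA
    · rw [Set.indicator_of_mem hp, Set.indicator_of_notMem (by simp [hp]), add_zero]
      rfl
    · rw [Set.indicator_of_notMem hp, Set.indicator_of_mem (Set.mem_compl hp), zero_add]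
      rfl

end
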